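/- Let k1, k3, k5, k7, C1, E be positive real numbers and set K1 = C1·k1·k7 − k3·k5·E. If K1 > 0, then the triple (M̄g, M̄s, D̄f) = (k1²·C1/K1, k1·k3·E/K1, E/k1) has all three components positive and is a zero of the reaction vector field f, i.e. f(M̄g, M̄s, D̄f) = (0,0,0). -/

import Mathlib

/-- the uniform steady state of the microtubule reaction system
is positive and is a zero of the reaction vector field
f(Mg, Ms, Df) = (−k7·Df·Mg + k5·Df·Ms + k1·Df,
                 k7·Df·Mg − k5·Df·Ms − E,
                 −k3·Df·Mg + C1·Ms − k1·Df + E). -/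
theorem microtubule_steady_state
    (k1 k3 k5 k7 C1 E K1 : ℝ)
    (hk1 : 0 < k1) (hk3 : 0 < k3) (hk5 : 0 < k5) (hk7 : 0 < k7)
    (hC1 : 0 < C1) (hE : 0 < E)
    (hK1 : K1 = C1 * k1 * k7 - k3 * k5 * E) (hK1pos : 0 < K1) :
    (0 < k1 ^ 2 * C1 / K1 ∧ 0 < k1 * k3 * E / K1 ∧ 0 < E / k1) ∧
    (-k7 * (E / k1) * (k1 ^ 2 * C1 / K1) + k5 * (E / k1) * (k1 * k3 * E / K1)
        + k1 * (E / k1) = 0 ∧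
     k7 * (E / k1) * (k1 ^ 2 * C1 / K1) - k5 * (E / k1) * (k1 * k3 * E / K1)
        - E = 0 ∧
     -k3 * (E / k1) * (k1 ^ 2 * C1 / K1) + C1 * (k1 * k3 * E / K1)
        - k1 * (E / k1) + E = 0) := by
  have hk1' : k1 ≠ 0 := hk1.ne'
  have hK1' : K1 ≠ 0 := hK1pos.ne'
  subst hK1
  refine ⟨⟨by positivity, by positivity, by positivity⟩, ?_, ?_, ?_⟩ <;>
    field_simp [(show k7 * k1 * C1 - E * k3 * k5 ≠ 0 by contrapose! hK1'; linarith)] <;> ring
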